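/- Let x₀ ∈ ℝ and let f : [x₀, ∞) → ℝ be a nonnegative, nonincreasing function. Assume there are constants C > 0 and α > 0 such that f(y) ≤ C·(y − x)^{−α}·f(x) for all y > x ≥ x₀. Then f(y) ≤ e^{1 − ζ(y − x₀)} · f(x₀) for every y ≥ x₀, where ζ = (e·C)^{−1/α}. -/

import Mathlib

/-- Classical Stampacchia iteration lemma, case β = 1. -/
theorem stampacchia_beta_eq_one
    (x₀ C α : ℝ) (f : ℝ → ℝ)
    (hC : 0 < C) (hα : 0 < α)
    (hnonneg : ∀ x, x₀ ≤ x → 0 ≤ f x)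
    (hmono : ∀ x y, x₀ ≤ x → x ≤ y → f y ≤ f x)
    (hiter : ∀ x y, x₀ ≤ x → x < y → f y ≤ C * (y - x) ^ (-α) * f x) :
    ∀ y, x₀ ≤ y →
      f y ≤ Real.exp (1 - (Real.exp 1 * C) ^ (-(1 / α)) * (y - x₀)) * f x₀ := by
  set E := Real.exp 1 * C with hE
  have hEpos : 0 < E := mul_pos (Real.exp_pos 1) hC
  set h := E ^ (1 / α) with hh
  have hhpos : 0 < h := Real.rpow_pos_of_pos hEpos _
  have hzeta : E ^ (-(1 / α)) = h⁻¹ := by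
    rw [Real.rpow_neg hEpos.le]
  -- key step
  have key : ∀ x, x₀ ≤ x → f (x + h) ≤ Real.exp (-1) * f x := by
    intro x hx
    have := hiter x (x + h) hx (by linarith)
    have hpow : C * (x + h - x) ^ (-α) = Real.exp (-1) := by
      have : (x + h - x) = h := by ring
      rw [this, hh, ← Real.rpow_mul hEpos.le]
      have he : (1 / α) * (-α) = -1 := by field_simp
      rw [he, Real.rpow_neg_one, hE, mul_inv, Real.exp_neg]
      field_simp
    calc f (x + h) ≤ C * (x + h - x) ^ (-α) * f x := this
      _ = Real.exp (-1) * f x := by rw [hpow]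
  have ind : ∀ n : ℕ, f (x₀ + n * h) ≤ Real.exp (-(n : ℝ)) * f x₀ := by
    intro n
    induction n with
    | zero => simp
    | succ n ih =>
      have hnn : (0:ℝ) ≤ (n:ℝ) * h := mul_nonneg (Nat.cast_nonneg n) hhpos.le
      have hx : x₀ ≤ x₀ + n * h := by linarith
      have h1 : f (x₀ + (n + 1 : ℕ) * h) ≤ Real.exp (-1) * f (x₀ + n * h) := by
        have := key (x₀ + n * h) hx
        convert this using 2
        push_cast; ring
      calc f (x₀ + (n + 1 : ℕ) * h) ≤ Real.exp (-1) * f (x₀ + n * h) := h1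
        _ ≤ Real.exp (-1) * (Real.exp (-(n : ℝ)) * f x₀) :=
            mul_le_mul_of_nonneg_left ih (Real.exp_pos _).le
        _ = Real.exp (-((n + 1 : ℕ) : ℝ)) * f x₀ := by
            rw [← mul_assoc, ← Real.exp_add]; push_cast; ring_nf
  intro y hy
  set n := ⌊(y - x₀) / h⌋₊ with hn
  have hnle : (n : ℝ) * h ≤ y - x₀ := by
    rw [hn]
    have := Nat.floor_le (a := (y - x₀) / h) (div_nonneg (by linarith) hhpos.le)
    calc (⌊(y - x₀) / h⌋₊ : ℝ) * h ≤ ((y - x₀) / h) * h := by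
          exact mul_le_mul_of_nonneg_right this hhpos.le
      _ = y - x₀ := div_mul_cancel₀ _ hhpos.ne'
  have hlt : (y - x₀) / h < n + 1 := Nat.lt_floor_add_one _
  have hnn : (0:ℝ) ≤ (n:ℝ) * h := mul_nonneg (Nat.cast_nonneg n) hhpos.le
  have h1 : f y ≤ f (x₀ + n * h) := hmono _ _ (by linarith) (by linarith)
  have h2 : Real.exp (-(n : ℝ)) ≤ Real.exp (1 - E ^ (-(1 / α)) * (y - x₀)) := by
    apply Real.exp_le_exp.mpr
    rw [hzeta]
    have : (y - x₀) / h < n + 1 := hlt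
    have : h⁻¹ * (y - x₀) < n + 1 := by
      rw [inv_mul_eq_div]; exact hlt
    linarith
  calc f y ≤ f (x₀ + n * h) := h1
    _ ≤ Real.exp (-(n : ℝ)) * f x₀ := ind n
    _ ≤ Real.exp (1 - E ^ (-(1 / α)) * (y - x₀)) * f x₀ :=
        mul_le_mul_of_nonneg_right h2 (hnonneg x₀ le_rfl)
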